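/- Fix a profile V over C, let w = R_2(V) be the 2-approval winner at V, and let i be a voter with w ∈ top_2(v_i). If v' is any manipulative vote of voter i at V with respect to 2-approval, then R_2(V_{-i}, v') = top(v_i); moreover top_2(v_i) = {top(v_i), w}, top(v_i) ∈ top_2(v'), and w ∉ top_2(v'). -/

import Mathlib

open scoped Classical

namespace Paper

variable {C I : Type*}

/-- The set of the `k` highest-ranked candidates in the vote `v`. -/
noncomputable def topk [Fintype C] (k : ℕ) (v : LinearOrder C) : Finset C :=
  Finset.univ.filter fun c => (Finset.univ.filter fun d => v.lt c d).card < k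

/-- The highest-ranked candidate of the vote `v`. -/
noncomputable def top [Fintype C] [Nonempty C] (v : LinearOrder C) : C :=
  @Finset.max' C v Finset.univ Finset.univ_nonempty

/-- The `k`-approval score of candidate `c` in the profile `V`. -/
noncomputable def sck [Fintype C] [Fintype I] (k : ℕ) (V : I → LinearOrder C) (c : C) : ℕ :=
  (Finset.univ.filter fun i => c ∈ topk k (V i)).card

/-- The `k`-approval winner of the profile `V` with tie-breaking order `tb`:
the `tb`-greatest candidate among the candidates with maximal `k`-approval score;
equivalently, the unique candidate beating every other candidate. -/
noncomputable def winner [Fintype C] [Nonempty C] [Fintype I] (k : ℕ) (tb : LinearOrder C)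
    (V : I → LinearOrder C) : C :=
  @Finset.max' C tb (Finset.univ.filter fun x => ∀ y, sck k V y ≤ sck k V x)
    (by
      obtain ⟨b, -, hb⟩ := Finset.exists_max_image Finset.univ (sck k V)
        ⟨Classical.arbitrary C, Finset.mem_univ _⟩
      exact ⟨b, Finset.mem_filter.mpr ⟨Finset.mem_univ _, fun y => hb y (Finset.mem_univ y)⟩⟩)

/-- `v'` is a manipulative vote of voter `i` at the profile `V`. -/
def manip [Fintype C] [Nonempty C] [Fintype I] [DecidableEq I] (k : ℕ) (tb : LinearOrder C)
    (V : I → LinearOrder C) (i : I) (v' : LinearOrder C) : Prop :=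
  (V i).lt (winner k tb V) (winner k tb (Function.update V i v'))

/-- `v'` is a level-1 strategy of voter `i` at the profile `V`: the outcome it produces is
strictly preferred (w.r.t. `i`'s sincere vote) to every other feasible outcome. -/
def level1 [Fintype C] [Nonempty C] [Fintype I] [DecidableEq I] (k : ℕ) (tb : LinearOrder C)
    (V : I → LinearOrder C) (i : I) (v' : LinearOrder C) : Prop :=
  ∀ u : LinearOrder C,
    winner k tb (Function.update V i u) ≠ winner k tb (Function.update V i v') →
    (V i).lt (winner k tb (Function.update V i u)) (winner k tb (Function.update V i v'))

/-- `v` is a minimal manipulative vote of voter `i` at `V`. -/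
def minimalManip [Fintype C] [Nonempty C] [Fintype I] [DecidableEq I] (k : ℕ)
    (tb : LinearOrder C) (V : I → LinearOrder C) (i : I) (v : LinearOrder C) : Prop :=
  manip k tb V i v ∧ ∀ v', manip k tb V i v' →
    ((topk k (V i)) \ (topk k v)).card ≤ ((topk k (V i)) \ (topk k v')).card


section Aux

variable [Fintype C] [Fintype I]

lemma mem_topk (k : ℕ) (v : LinearOrder C) (c : C) :
    c ∈ topk k v ↔ (Finset.univ.filter fun d => v.lt c d).card < k := by
  simp [topk]

lemma winner_mem [Nonempty C] (k : ℕ) (tb : LinearOrder C) (V : I → LinearOrder C) :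
    winner k tb V ∈ Finset.univ.filter fun x => ∀ y, sck k V y ≤ sck k V x := by
  unfold winner
  exact Finset.max'_mem _ _

lemma winner_le [Nonempty C] (k : ℕ) (tb : LinearOrder C) (V : I → LinearOrder C) (y : C) :
    sck k V y ≤ sck k V (winner k tb V) :=
  (Finset.mem_filter.mp (winner_mem k tb V)).2 y

lemma le_winner [Nonempty C] (k : ℕ) (tb : LinearOrder C) (V : I → LinearOrder C) (y : C)
    (hy : ∀ z, sck k V z ≤ sck k V y) : tb.le y (winner k tb V) := by
  unfold winner
  exact Finset.le_max' _ _ (Finset.mem_filter.mpr ⟨Finset.mem_univ _, hy⟩)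

lemma sck_balance [DecidableEq I] (k : ℕ) (V : I → LinearOrder C) (i : I)
    (v' : LinearOrder C) (c : C) :
    sck k (Function.update V i v') c + (if c ∈ topk k (V i) then 1 else 0)
      = sck k V c + (if c ∈ topk k v' then 1 else 0) := by
  have hdecomp : ∃ B : ℕ, ∀ u : LinearOrder C, sck k (Function.update V i u) c =
      B + (if c ∈ topk k u then 1 else 0) := by
    refine ⟨∑ j ∈ Finset.univ.erase i, if c ∈ topk k (V j) then 1 else 0, fun u => ?_⟩
    unfold sck
    rw [Finset.card_filter]
    rw [← Finset.sum_erase_add Finset.univ _ (Finset.mem_univ i)]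
    congr 1
    · apply Finset.sum_congr rfl
      intro j hj
      by_cases hc : c ∈ topk k (V j) <;>
        simp [Function.update_of_ne (Finset.ne_of_mem_erase hj), hc]
    · by_cases hc : c ∈ topk k u <;> simp [hc]
  obtain ⟨B, hB⟩ := hdecomp
  have h1 := hB v'
  have h2 := hB (V i)
  rw [Function.update_eq_self] at h2
  rw [h1, h2]
  by_cases hc1 : c ∈ topk k (V i) <;> by_cases hc2 : c ∈ topk k v' <;>
    simp only [hc1, hc2, if_true, if_false, ite_true, ite_false]

lemma topk_structure [Nonempty C] [DecidableEq C] (v : LinearOrder C) (w w' : C)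
    (hw : w ∈ topk 2 v) (hlt : v.lt w w') :
    w' = top v ∧ topk 2 v = {w', w} ∧ w' ∈ topk 2 v := by
  letI := v
  have hne : w ≠ w' := ne_of_lt hlt
  -- the strict upper set of `w` is exactly `{w'}`
  have hU : (Finset.univ.filter fun d => v.lt w d) = {w'} := by
    have h1 : w' ∈ Finset.univ.filter fun d => v.lt w d := by
      simp only [Finset.mem_filter, Finset.mem_univ, true_and]; exact hlt
    have hcard2 : (Finset.univ.filter fun d => v.lt w d).card < 2 := (mem_topk 2 v w).mp hw
    have hpos : 0 < (Finset.univ.filter fun d => v.lt w d).card :=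
      Finset.card_pos.mpr ⟨w', h1⟩
    have hcard1 : (Finset.univ.filter fun d => v.lt w d).card = 1 := by omega
    obtain ⟨a, ha⟩ := Finset.card_eq_one.mp hcard1
    rw [ha] at h1 ⊢
    rw [Finset.mem_singleton.mp h1]
  have hUw' : (Finset.univ.filter fun d => v.lt w' d) = ∅ := by
    rw [Finset.eq_empty_iff_forall_notMem]
    intro d hd
    rw [Finset.mem_filter] at hd
    have hwd : d ∈ Finset.univ.filter fun d => v.lt w d := by
      simp only [Finset.mem_filter, Finset.mem_univ, true_and]
      exact lt_trans hlt hd.2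
    rw [hU, Finset.mem_singleton] at hwd
    exact absurd (hwd ▸ hd.2) (lt_irrefl w')
  have htop : w' = top v := by
    have h1 : v.le w' (top v) := Finset.le_max' _ _ (Finset.mem_univ w')
    have h2 : v.le (top v) w' := by
      by_contra h
      have : top v ∈ Finset.univ.filter fun d => v.lt w' d := by
        simp only [Finset.mem_filter, Finset.mem_univ, true_and]
        exact lt_of_not_ge h
      rw [hUw'] at this
      exact absurd this (Finset.notMem_empty _)
    exact le_antisymm h1 h2
  have hmemw' : w' ∈ topk 2 v := by
    rw [mem_topk, hUw']
    simp
  refine ⟨htop, ?_, hmemw'⟩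
  ext c
  simp only [Finset.mem_insert, Finset.mem_singleton]
  constructor
  · intro hc
    by_contra hcon
    push_neg at hcon
    obtain ⟨hc1, hc2⟩ := hcon
    have hcw : v.lt c w := by
      rcases lt_trichotomy c w with h | h | h
      · exact h
      · exact absurd h hc2
      · have : c ∈ Finset.univ.filter fun d => v.lt w d := by
          simp only [Finset.mem_filter, Finset.mem_univ, true_and]; exact h
        rw [hU, Finset.mem_singleton] at this
        exact absurd this hc1
    have hsub : ({w, w'} : Finset C) ⊆ Finset.univ.filter fun d => v.lt c d := by
      intro x hx
      simp only [Finset.mem_insert, Finset.mem_singleton] at hx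
      simp only [Finset.mem_filter, Finset.mem_univ, true_and]
      rcases hx with rfl | rfl
      · exact hcw
      · exact lt_trans hcw hlt
    have hcard : ({w, w'} : Finset C).card = 2 := by
      rw [Finset.card_insert_of_notMem (by simpa using hne), Finset.card_singleton]
    have := Finset.card_le_card hsub
    have := (mem_topk 2 v c).mp hc
    omega
  · rintro (rfl | rfl)
    · exact hmemw'
    · exact hw

end Aux

/-- any manipulative vote of a voter ranking the 2-approval winner in his
top two positions makes his top candidate the winner, demoting the old winner. -/
theorem statement_6 {C I : Type*} [Fintype C] [Nonempty C] [DecidableEq C]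
    [Fintype I] [DecidableEq I]
    (tb : LinearOrder C) (V : I → LinearOrder C) (i : I)
    (hw : winner 2 tb V ∈ topk 2 (V i))
    (v' : LinearOrder C) (hman : manip 2 tb V i v') :
    winner 2 tb (Function.update V i v') = top (V i) ∧
    topk 2 (V i) = {top (V i), winner 2 tb V} ∧
    top (V i) ∈ topk 2 v' ∧
    winner 2 tb V ∉ topk 2 v' := by
  have hlt : (V i).lt (winner 2 tb V) (winner 2 tb (Function.update V i v')) := hman
  obtain ⟨htop, htopk, hw'mem⟩ :=
    topk_structure (V i) (winner 2 tb V) (winner 2 tb (Function.update V i v')) hw hlt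
  have hbal := fun c => sck_balance 2 V i v' c
  have hmaxV := fun y => winner_le 2 tb V y
  have hmaxV' := fun y => winner_le 2 tb (Function.update V i v') y
  -- the key tie-breaking contradiction
  have key : sck 2 V (winner 2 tb (Function.update V i v')) = sck 2 V (winner 2 tb V) →
      sck 2 (Function.update V i v') (winner 2 tb V) =
        sck 2 (Function.update V i v') (winner 2 tb (Function.update V i v')) → False := by
    intro h1 h2
    have hle1 : tb.le (winner 2 tb (Function.update V i v')) (winner 2 tb V) :=
      le_winner 2 tb V _ (fun z => by rw [h1]; exact hmaxV z)
    have hle2 : tb.le (winner 2 tb V) (winner 2 tb (Function.update V i v')) :=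
      le_winner 2 tb (Function.update V i v') _ (fun z => by rw [h2]; exact hmaxV' z)
    have heq := tb.le_antisymm _ _ hle2 hle1
    rw [heq] at hlt
    obtain ⟨hl, hnl⟩ := ((V i).lt_iff_le_not_ge _ _).mp hlt
    exact hnl hl
  -- Step 1: the old winner is not approved by the manipulative vote
  have hwnot : winner 2 tb V ∉ topk 2 v' := by
    intro hmem
    have e1 := hbal (winner 2 tb V)
    rw [if_pos hw, if_pos hmem] at e1
    have e2 := hbal (winner 2 tb (Function.update V i v'))
    rw [if_pos hw'mem] at e2
    have a2 : sck 2 (Function.update V i v') (winner 2 tb (Function.update V i v'))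
        ≤ sck 2 V (winner 2 tb (Function.update V i v')) := by
      split at e2 <;> omega
    have b1 := hmaxV' (winner 2 tb V)
    have b2 := hmaxV (winner 2 tb (Function.update V i v'))
    exact key (by omega) (by omega)
  -- Step 2: the manipulator's top candidate is approved by the manipulative vote
  have hw'in : winner 2 tb (Function.update V i v') ∈ topk 2 v' := by
    by_contra hn
    have e1 := hbal (winner 2 tb V)
    rw [if_pos hw, if_neg hwnot] at e1
    have e2 := hbal (winner 2 tb (Function.update V i v'))
    rw [if_pos hw'mem, if_neg hn] at e2
    have b1 := hmaxV' (winner 2 tb V)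
    have b2 := hmaxV (winner 2 tb (Function.update V i v'))
    exact key (by omega) (by omega)
  exact ⟨htop, htop ▸ htopk, htop ▸ hw'in, hwnot⟩

end Paper
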